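/- The classical elastic-collision velocity map satisfies the parametric set-theoretical Yang–Baxter equation: for all positive real masses m₁, m₂, m₃ and all real velocities (v₁, v₂, v₃) ∈ ℝ³, one has R⁰₂₃ ∘ R⁰₁₃ ∘ R⁰₁₂ (v₁,v₂,v₃) = R⁰₁₂ ∘ R⁰₁₃ ∘ R⁰₂₃ (v₁,v₂,v₃), where R⁰ᵢⱼ denotes the action of the map R⁰ with parameters (mᵢ, mⱼ) on the i-th and j-th components of ℝ³. -/
import Mathlib

/-- The classical elastic-collision velocity map `R⁰_{m₁,m₂}`. -/
noncomputable def R0 (m₁ m₂ : ℝ) (v₁ v₂ : ℝ) : ℝ × ℝ :=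
  ((v₁ * (m₁ - m₂) + 2 * m₂ * v₂) / (m₁ + m₂),
   (v₂ * (m₂ - m₁) + 2 * m₁ * v₁) / (m₁ + m₂))

/-- Action of a map on the first and second factors of `X × X × X`. -/
def act12 {X : Type*} (R : X → X → X × X) (p : X × X × X) : X × X × X :=
  ((R p.1 p.2.1).1, (R p.1 p.2.1).2, p.2.2)

/-- Action of a map on the first and third factors of `X × X × X`. -/
def act13 {X : Type*} (R : X → X → X × X) (p : X × X × X) : X × X × X :=
  ((R p.1 p.2.2).1, p.2.1, (R p.1 p.2.2).2)

/-- Action of a map on the second and third factors of `X × X × X`. -/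
def act23 {X : Type*} (R : X → X → X × X) (p : X × X × X) : X × X × X :=
  (p.1, (R p.2.1 p.2.2).1, (R p.2.1 p.2.2).2)

/-- The classical collision map satisfies the parametric set-theoretical
Yang–Baxter equation. -/
theorem classical_collision_yang_baxter
    (m₁ m₂ m₃ : ℝ) (hm₁ : 0 < m₁) (hm₂ : 0 < m₂) (hm₃ : 0 < m₃)
    (v : ℝ × ℝ × ℝ) :
    act23 (R0 m₂ m₃) (act13 (R0 m₁ m₃) (act12 (R0 m₁ m₂) v)) =
      act12 (R0 m₁ m₂) (act13 (R0 m₁ m₃) (act23 (R0 m₂ m₃) v)) := by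
  have h12 : m₁ + m₂ ≠ 0 := by positivity
  have h13 : m₁ + m₃ ≠ 0 := by positivity
  have h23 : m₂ + m₃ ≠ 0 := by positivity
  obtain ⟨v₁, v₂, v₃⟩ := v
  simp only [act12, act13, act23, R0, Prod.mk.injEq]
  refine ⟨?_, ?_, ?_⟩ <;> field_simp <;> ring
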